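/- Let X, Y be coinfinite primitive recursive sets with R_X ≤_pr R_Y. Then (X,Y) satisfies the ♦-property if and only if there exists a primitive recursive function r such that p_{\bar X}(n) ≤ r(p_{\bar Y}(n+1)) for infinitely many n, where p_{\bar U} is the increasing enumeration of the complement of U. -/

import Mathlib

/-- The equivalence relation `R_X`: `x R_X y` iff both in `X` or `x = y`. -/
def REq (X : Set ℕ) (x y : ℕ) : Prop := (x ∈ X ∧ y ∈ X) ∨ x = y

/-- Primitive recursive reducibility between binary relations on ℕ. -/
def PrRed (R S : ℕ → ℕ → Prop) : Prop :=
  ∃ f : ℕ → ℕ, Primrec f ∧ ∀ x y, R x y ↔ S (f x) (f y)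

/-- pr-bireducibility. -/
def PrEquiv (R S : ℕ → ℕ → Prop) : Prop := PrRed R S ∧ PrRed S R

/-- `X` is a primitive recursive set. -/
def PRSet (X : Set ℕ) : Prop :=
  ∃ f : ℕ → Bool, Primrec f ∧ ∀ n, n ∈ X ↔ f n = true

/-- `#(0^X)[s]`: the number of elements of the complement of `X` that are `≤ s`. -/
noncomputable def zc (X : Set ℕ) (s : ℕ) : ℕ := {k | k ≤ s ∧ k ∉ X}.ncard

/-- The ♦-property for a pair of sets. -/
def DiamondProp (X Y : Set ℕ) : Prop :=
  ∃ X' Y' : Set ℕ, PRSet X' ∧ PRSet Y' ∧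
    PrEquiv (REq X') (REq X) ∧ PrEquiv (REq Y') (REq Y) ∧
    ∀ s, ∃ t, s ≤ t ∧ zc X' t = zc Y' t

/-- The increasing enumeration of the complement of `U`. -/
noncomputable def penum (U : Set ℕ) (n : ℕ) : ℕ := Nat.nth (fun k => k ∉ U) n


open Classical in
lemma zc_eq_count (U : Set ℕ) (s : ℕ) : zc U s = Nat.count (fun k => k ∉ U) (s + 1) := by
  rw [zc, Nat.count_eq_card_filter_range]
  rw [show {k | k ≤ s ∧ k ∉ U} =
    ↑((Finset.range (s+1)).filter (fun k => k ∉ U)) by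
      ext k; simp [Nat.lt_succ_iff]]
  exact Set.ncard_coe_finset _

lemma compl_setOf (U : Set ℕ) : Uᶜ = {k | k ∉ U} := rfl

open Classical in
lemma penum_le_iff {U : Set ℕ} (hUc : Uᶜ.Infinite) {n t : ℕ} :
    penum U n ≤ t ↔ n < zc U t := by
  rw [zc_eq_count, penum]
  have h : (setOf fun k => k ∉ U).Infinite := by exact hUc
  rw [Nat.lt_nth_iff_count_lt h, Nat.lt_succ_iff]

open Classical in
lemma penum_mem {U : Set ℕ} (hUc : Uᶜ.Infinite) (n : ℕ) : penum U n ∉ U := by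
  have h : (setOf fun k => k ∉ U).Infinite := by exact hUc
  exact Nat.nth_mem_of_infinite h n

open Classical in
lemma penum_strictMono {U : Set ℕ} (hUc : Uᶜ.Infinite) : StrictMono (penum U) := by
  have h : (setOf fun k => k ∉ U).Infinite := by exact hUc
  exact Nat.nth_strictMono h

open Classical in
lemma zc_penum {U : Set ℕ} (hUc : Uᶜ.Infinite) (n : ℕ) : zc U (penum U n) = n + 1 := by
  have h : (setOf fun k => k ∉ U).Infinite := by exact hUc
  rw [zc_eq_count, Nat.count_succ]
  have h1 : Nat.count (fun k => k ∉ U) (Nat.nth (fun k => k ∉ U) n) = n :=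
    Nat.count_nth_of_infinite h n
  have h2 := Nat.nth_mem_of_infinite h n
  simp [penum, h1, h2]

open Classical in
lemma le_penum_of_lt_succ {U : Set ℕ} {x n : ℕ} (hx : x ∉ U)
    (h : x < penum U (n + 1)) : x ≤ penum U n :=
  Nat.le_nth_of_lt_nth_succ h hx

lemma zc_mono (U : Set ℕ) : Monotone (zc U) := by
  intro a b hab
  classical
  rw [zc_eq_count, zc_eq_count]
  exact Nat.count_monotone _ (by omega)

lemma infinite_compl_of_unbounded_zc {U : Set ℕ} (h : ∀ N, ∃ t, N ≤ zc U t) :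
    Uᶜ.Infinite := by
  by_contra hfin
  rw [Set.not_infinite] at hfin
  obtain ⟨t, ht⟩ := h (Uᶜ.ncard + 1)
  have : zc U t ≤ Uᶜ.ncard := by
    apply Set.ncard_le_ncard _ hfin
    intro k hk; exact hk.2
  omega

lemma REq_refl (A : Set ℕ) (x : ℕ) : REq A x x := Or.inr rfl

/-- The key counting lemma for reductions. -/
lemma red_zc_le {A B : Set ℕ} {f : ℕ → ℕ}
    (hf : ∀ x y, REq A x y ↔ REq B (f x) (f y))
    {g : ℕ → ℕ} (hg : ∀ k t, k ≤ t + 2 → f k ≤ g t) (t : ℕ) :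
    zc A t ≤ zc B (g t) := by
  have hfin : {k | k ≤ g t ∧ k ∉ B}.Finite :=
    (Set.finite_Iic (g t)).subset fun k hk => hk.1
  have hinj : ∀ a b, a ∉ A → f a = f b → b ≤ t → a ≤ t → a = b := by
    intro a b ha hab _ _
    rcases (hf a b).2 (Or.inr hab) with ⟨h1, _⟩ | h
    · exact absurd h1 ha
    · exact h
  by_cases hex : ∃ x, x ∉ A ∧ f x ∈ B
  · obtain ⟨e, he, hfe⟩ := hex
    have key : ∀ y, y ≠ e → f y ∉ B := by
      intro y hy
      have hne : ¬ REq A e y := by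
        rintro (⟨h1, _⟩ | h1)
        · exact he h1
        · exact hy h1.symm
      rw [hf] at hne
      intro hfy
      exact hne (Or.inl ⟨hfe, hfy⟩)
    set z : ℕ := if t + 1 = e then t + 2 else t + 1 with hz
    have hzt : z ≤ t + 2 ∧ t < z ∧ z ≠ e := by
      rw [hz]; split <;> rename_i hh
      · exact ⟨le_rfl, by omega, by omega⟩
      · exact ⟨by omega, by omega, hh⟩
    have htrans : ∀ a b, a ∉ A → a ≠ b → f a = f b → b ∈ A → False := by
      intro a b ha hab heq hbA
      rcases (hf a b).2 (Or.inr heq) with ⟨h1, _⟩ | h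
      · exact ha h1
      · exact hab h
    refine Set.ncard_le_ncard_of_injOn (fun k => if k = e then f z else f k) ?_ ?_ hfin
    · rintro k ⟨hk1, hk2⟩
      simp only [Set.mem_setOf_eq]
      by_cases hke : k = e
      · rw [if_pos hke]
        exact ⟨hg z t hzt.1, key z hzt.2.2⟩
      · rw [if_neg hke]
        exact ⟨hg k t (by omega), key k hke⟩
    · rintro k1 ⟨hk1, hk1'⟩ k2 ⟨hk2, hk2'⟩ heq
      dsimp at heq
      by_cases h1 : k1 = e <;> by_cases h2 : k2 = e
      · omega
      · rw [if_pos h1, if_neg h2] at heq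
        -- f z = f k2, z ∉ [0,t], k2 ∉ A
        rcases (hf z k2).2 (Or.inr heq) with ⟨_, hc⟩ | hc
        · exact absurd hc hk2'
        · omega
      · rw [if_neg h1, if_pos h2] at heq
        rcases (hf k1 z).2 (Or.inr heq) with ⟨hc, _⟩ | hc
        · exact absurd hc hk1'
        · omega
      · rw [if_neg h1, if_neg h2] at heq
        exact hinj k1 k2 hk1' heq hk2 hk1
  · push_neg at hex
    refine Set.ncard_le_ncard_of_injOn f ?_ ?_ hfin
    · rintro k ⟨hk1, hk2⟩
      exact ⟨hg k t (by omega), hex k hk2⟩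
    · rintro k1 ⟨ha, hk1'⟩ k2 ⟨hb, hk2'⟩ heq
      exact hinj k1 k2 hk1' heq hb ha

/-- Running max over `f 0, ..., f (t+2)`. -/
def gm (f : ℕ → ℕ) : ℕ → ℕ := fun t =>
  Nat.rec (max (max (f 0) (f 1)) (f 2)) (fun n ih => max ih (f (n + 3))) t

lemma gm_succ (f : ℕ → ℕ) (t : ℕ) : gm f (t + 1) = max (gm f t) (f (t + 3)) := rfl

lemma gm_mono (f : ℕ → ℕ) : Monotone (gm f) :=
  monotone_nat_of_le_succ fun t => by rw [gm_succ]; exact le_max_left _ _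

lemma le_gm (f : ℕ → ℕ) : ∀ k t, k ≤ t + 2 → f k ≤ gm f t := by
  intro k t
  induction t with
  | zero =>
    intro hk
    interval_cases k
    · exact le_max_of_le_left (le_max_left _ _)
    · exact le_max_of_le_left (le_max_right _ _)
    · exact le_max_right _ _
  | succ n ih =>
    intro hk
    rcases Nat.lt_or_ge k (n + 3) with h | h
    · exact le_trans (ih (by omega)) (gm_mono f (Nat.le_succ n))
    · have : k = n + 3 := by omega
      rw [this, gm_succ]; exact le_max_right _ _

lemma gm_primrec {f : ℕ → ℕ} (hf : Primrec f) : Primrec (gm f) := by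
  have : Primrec₂ (fun (n ih : ℕ) => max ih (f (n + 3))) :=
    Primrec.nat_max.comp₂ Primrec₂.right
      ((hf.comp (Primrec.succ.comp (Primrec.succ.comp Primrec.succ))).comp₂ Primrec₂.left)
  exact Primrec.nat_rec₁ _ this

lemma red_penum_le {A B : Set ℕ} (hAc : Aᶜ.Infinite) (hBc : Bᶜ.Infinite)
    {f : ℕ → ℕ} (hf : ∀ x y, REq A x y ↔ REq B (f x) (f y)) (k : ℕ) :
    penum B k ≤ gm f (penum A k) := by
  rw [penum_le_iff hBc]
  have h1 : zc A (penum A k) = k + 1 := zc_penum hAc k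
  have h2 := red_zc_le hf (le_gm f) (penum A k)
  omega

lemma forward_dir {X Y : Set ℕ} (hXc : Xᶜ.Infinite) (hYc : Yᶜ.Infinite)
    (hD : DiamondProp X Y) :
    ∃ r : ℕ → ℕ, Primrec r ∧ {n | penum X n ≤ r (penum Y (n + 1))}.Infinite := by
  obtain ⟨X', Y', _, _, ⟨⟨fa, hfa, ha⟩, ⟨fa', hfa', ha'⟩⟩,
    ⟨⟨fb', hfb', hb'⟩, ⟨fb, hfb, hb⟩⟩, hio⟩ := hD
  -- X' and Y' have infinite complements
  have hX'c : X'ᶜ.Infinite := by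
    apply infinite_compl_of_unbounded_zc
    intro N
    refine ⟨gm fa' (penum X N), ?_⟩
    have h1 := red_zc_le ha' (le_gm fa') (penum X N)
    have h2 := zc_penum hXc N
    omega
  have hY'c : Y'ᶜ.Infinite := by
    apply infinite_compl_of_unbounded_zc
    intro N
    refine ⟨gm fb (penum Y N), ?_⟩
    have h1 := red_zc_le hb (le_gm fb) (penum Y N)
    have h2 := zc_penum hYc N
    omega
  refine ⟨fun t => gm fa (gm fb t), (gm_primrec hfa).comp (gm_primrec hfb), ?_⟩
  apply Set.infinite_of_forall_exists_gt
  intro N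
  obtain ⟨t0, ht0ge, heq⟩ := hio (penum X' (N + 2))
  set m := zc X' t0 with hm
  have hmge : N + 3 ≤ m := by
    have h1 : zc X' (penum X' (N + 2)) = N + 3 := zc_penum hX'c (N + 2)
    have h2 := zc_mono X' ht0ge
    omega
  refine ⟨m - 1, ?_, by omega⟩
  simp only [Set.mem_setOf_eq]
  have hstep1 : penum X (m - 1) ≤ gm fa t0 := by
    rw [penum_le_iff hXc]
    have h1 := red_zc_le ha (le_gm fa) t0
    omega
  have hstep2 : t0 < penum Y' m := by
    by_contra hcon
    push_neg at hcon
    rw [penum_le_iff hY'c] at hcon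
    omega
  have hstep3 : penum Y' m ≤ gm fb (penum Y m) := red_penum_le hYc hY'c hb m
  have hm1 : m - 1 + 1 = m := by omega
  rw [hm1]
  exact le_trans hstep1 (le_trans (gm_mono fa (by omega)) le_rfl)

/-! ### Bounded primitive recursive helpers -/

/-- Count of `false` values of `χ` below `n`. -/
def cnt (χ : ℕ → Bool) : ℕ → ℕ := fun n =>
  Nat.rec 0 (fun m ih => ih + (bif χ m then 0 else 1)) n

lemma cnt_succ (χ : ℕ → Bool) (n : ℕ) :
    cnt χ (n + 1) = cnt χ n + (bif χ n then 0 else 1) := rfl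

open Classical in
lemma cnt_eq_count {A : Set ℕ} {χ : ℕ → Bool} (hχ : ∀ n, n ∈ A ↔ χ n = true) (n : ℕ) :
    cnt χ n = Nat.count (fun k => k ∉ A) n := by
  induction n with
  | zero => rfl
  | succ m ih =>
    rw [Nat.count_succ, cnt_succ, ih]
    by_cases hm : m ∈ A
    · have : χ m = true := (hχ m).1 hm
      simp [this, hm]
    · have : χ m = false := by
        cases hc : χ m
        · rfl
        · exact absurd ((hχ m).2 hc) hm
      simp [this, hm]

lemma cnt_eq_zc {A : Set ℕ} {χ : ℕ → Bool} (hχ : ∀ n, n ∈ A ↔ χ n = true) (s : ℕ) :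
    cnt χ (s + 1) = zc A s := by
  rw [zc_eq_count, cnt_eq_count hχ]

lemma cnt_primrec {χ : ℕ → Bool} (hχ : Primrec χ) : Primrec (cnt χ) := by
  have h : Primrec fun p : ℕ × ℕ => p.2 + (bif χ p.1 then 0 else 1) :=
    Primrec.nat_add.comp Primrec.snd
      (Primrec.cond (hχ.comp Primrec.fst) (Primrec.const 0) (Primrec.const 1))
  exact Primrec.nat_rec₁ 0 h.to₂

/-- Running maximum of `r` on `[0, n]`. -/
def RM (r : ℕ → ℕ) : ℕ → ℕ := fun n =>
  Nat.rec (r 0) (fun m ih => max ih (r (m + 1))) n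

lemma RM_succ (r : ℕ → ℕ) (n : ℕ) : RM r (n + 1) = max (RM r n) (r (n + 1)) := rfl

lemma RM_mono (r : ℕ → ℕ) : Monotone (RM r) :=
  monotone_nat_of_le_succ fun n => by rw [RM_succ]; exact le_max_left _ _

lemma le_RM (r : ℕ → ℕ) {k n : ℕ} (h : k ≤ n) : r k ≤ RM r n := by
  induction n with
  | zero => interval_cases k; exact le_rfl
  | succ m ih =>
    rcases Nat.lt_or_ge k (m + 1) with h' | h'
    · exact le_trans (ih (by omega)) (RM_mono r (Nat.le_succ m))
    · have : k = m + 1 := by omega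
      rw [this, RM_succ]; exact le_max_right _ _

lemma RM_primrec {r : ℕ → ℕ} (hr : Primrec r) : Primrec (RM r) := by
  have h : Primrec fun p : ℕ × ℕ => max p.2 (r (p.1 + 1)) :=
    Primrec.nat_max.comp Primrec.snd (hr.comp (Primrec.succ.comp Primrec.fst))
  exact Primrec.nat_rec₁ _ h.to₂

/-- The odd-valued, fast-growing majorant of `r`. -/
def rhat (r : ℕ → ℕ) (y : ℕ) : ℕ := 2 * (y + 1) * (RM r y + 2) + 1

lemma rhat_strictMono (r : ℕ → ℕ) : StrictMono (rhat r) := by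
  apply strictMono_nat_of_lt_succ
  intro y
  have h1 : RM r y ≤ RM r (y + 1) := RM_mono r (Nat.le_succ y)
  unfold rhat
  nlinarith

lemma rhat_gt (r : ℕ → ℕ) (y : ℕ) : y < rhat r y := by
  have : 2 * (y + 1) * 2 ≤ 2 * (y + 1) * (RM r y + 2) := by nlinarith
  unfold rhat; omega

lemma rhat_odd (r : ℕ → ℕ) (y : ℕ) : rhat r y % 2 = 1 := by
  unfold rhat
  have h : 2 * (y + 1) * (RM r y + 2) = 2 * ((y + 1) * (RM r y + 2)) := by ring
  omega

lemma rhat_gap (r : ℕ → ℕ) {y y' x : ℕ} (hyy : y < y') (hx : x ≤ RM r y') :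
    rhat r y + 2 * x + 4 ≤ rhat r y' ∧ 4 * x + 5 ≤ rhat r y' := by
  have h1 : RM r y ≤ RM r y' := RM_mono r (le_of_lt hyy)
  have h2 : y + 2 ≤ y' + 1 := by omega
  have h3 : 1 ≤ y' := by omega
  constructor
  · have : 2 * (y + 1) * (RM r y + 2) + 2 * (RM r y' + 2) ≤ 2 * (y' + 1) * (RM r y' + 2) := by
      nlinarith
    unfold rhat; omega
  · have : 2 * 2 * (x + 2) ≤ 2 * (y' + 1) * (RM r y' + 2) := by nlinarith
    unfold rhat; omega

lemma rhat_primrec {r : ℕ → ℕ} (hr : Primrec r) : Primrec (rhat r) := by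
  unfold rhat
  apply Primrec.nat_add.comp _ (Primrec.const 1)
  exact Primrec.nat_mul.comp
    (Primrec.nat_mul.comp (Primrec.const 2) (Primrec.succ.comp Primrec.id))
    (Primrec.nat_add.comp (RM_primrec hr) (Primrec.const 2))

/-- Bounded greatest witness search. -/
def fgr (q : ℕ → ℕ → Bool) (a : ℕ) : ℕ → ℕ := fun n =>
  Nat.rec 0 (fun m ih => bif q a (m + 1) then m + 1 else ih) n

lemma fgr_succ (q : ℕ → ℕ → Bool) (a n : ℕ) :
    fgr q a (n + 1) = bif q a (n + 1) then n + 1 else fgr q a n := rfl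

lemma fgr_le (q : ℕ → ℕ → Bool) (a : ℕ) : ∀ n, fgr q a n ≤ n := by
  intro n
  induction n with
  | zero => exact le_rfl
  | succ m ih => rw [fgr_succ]; cases q a (m + 1) <;> simp <;> omega

lemma fgr_mono_succ (q : ℕ → ℕ → Bool) (a n : ℕ) : fgr q a n ≤ fgr q a (n + 1) := by
  rw [fgr_succ]
  have := fgr_le q a n
  cases q a (n + 1) <;> simp <;> omega

lemma le_fgr {q : ℕ → ℕ → Bool} {a k n : ℕ} (hk : k ≤ n) (hq : q a k = true) :
    k ≤ fgr q a n := by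
  induction n with
  | zero => omega
  | succ m ih =>
    rcases Nat.lt_or_ge k (m + 1) with h' | h'
    · exact le_trans (ih (by omega)) (fgr_mono_succ q a m)
    · have hkm : k = m + 1 := by omega
      rw [fgr_succ, ← hkm, hq]; simp

lemma fgr_zero_or {q : ℕ → ℕ → Bool} {a : ℕ} (n : ℕ) :
    fgr q a n = 0 ∨ q a (fgr q a n) = true := by
  induction n with
  | zero => exact Or.inl rfl
  | succ m ih =>
    rw [fgr_succ]
    cases hc : q a (m + 1)
    · simpa using ih
    · simp [hc]

lemma fgr_primrec {q : ℕ → ℕ → Bool} (hq : Primrec₂ q) : Primrec₂ (fgr q) := by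
  have h : Primrec fun p : ℕ × (ℕ × ℕ) => bif q p.1 (p.2.1 + 1) then p.2.1 + 1 else p.2.2 :=
    Primrec.cond (hq.comp Primrec.fst (Primrec.succ.comp (Primrec.fst.comp Primrec.snd)))
      (Primrec.succ.comp (Primrec.fst.comp Primrec.snd))
      (Primrec.snd.comp Primrec.snd)
  exact Primrec.nat_rec (Primrec.const 0) h.to₂

/-- Bounded existential. -/
def bexb (q : ℕ → ℕ → Bool) (a : ℕ) : ℕ → Bool := fun n =>
  Nat.rec (q a 0) (fun m ih => ih || q a (m + 1)) n

lemma bexb_iff {q : ℕ → ℕ → Bool} {a n : ℕ} :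
    bexb q a n = true ↔ ∃ k, k ≤ n ∧ q a k = true := by
  induction n with
  | zero =>
    constructor
    · intro h; exact ⟨0, le_rfl, h⟩
    · rintro ⟨k, hk, hq⟩; interval_cases k; exact hq
  | succ m ih =>
    show (bexb q a m || q a (m + 1)) = true ↔ _
    rw [Bool.or_eq_true, ih]
    constructor
    · rintro (⟨k, hk, hq⟩ | h)
      · exact ⟨k, by omega, hq⟩
      · exact ⟨m + 1, le_rfl, h⟩
    · rintro ⟨k, hk, hq⟩
      rcases Nat.lt_or_ge k (m + 1) with h' | h'
      · exact Or.inl ⟨k, by omega, hq⟩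
      · have : k = m + 1 := by omega
        exact Or.inr (this ▸ hq)

lemma bexb_primrec {q : ℕ → ℕ → Bool} (hq : Primrec₂ q) : Primrec₂ (bexb q) := by
  have h : Primrec fun p : ℕ × (ℕ × Bool) => p.2.2 || q p.1 (p.2.1 + 1) :=
    Primrec.or.comp (Primrec.snd.comp Primrec.snd)
      (hq.comp Primrec.fst (Primrec.succ.comp (Primrec.fst.comp Primrec.snd)))
  exact Primrec.nat_rec (hq.comp Primrec.id (Primrec.const 0)) h.to₂

/-! ### Image sets -/

/-- The "stretched copy" of `A` along `u`: the complement is the `u`-image of `Aᶜ`. -/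
def imgSet (A : Set ℕ) (u : ℕ → ℕ) : Set ℕ := {t | ¬ ∃ x, x ∉ A ∧ u x = t}

lemma imgSet_not_mem_iff {A : Set ℕ} {u : ℕ → ℕ} {t : ℕ} :
    t ∉ imgSet A u ↔ ∃ x, x ∉ A ∧ u x = t := by simp [imgSet]

section ImgSet

variable {A : Set ℕ} {χ : ℕ → Bool} {u : ℕ → ℕ}
  (hχ : ∀ n, n ∈ A ↔ χ n = true) (hum : StrictMono u) (hugt : ∀ x, x < u x)

/-- Witness predicate: `x ∉ A ∧ u x = t`. -/
def wq (χ : ℕ → Bool) (u : ℕ → ℕ) : ℕ → ℕ → Bool := fun t x => !χ x && (u x == t)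

include hχ in
lemma wq_iff {t x : ℕ} : wq χ u t x = true ↔ x ∉ A ∧ u x = t := by
  unfold wq
  rw [Bool.and_eq_true, Bool.not_eq_true', beq_iff_eq]
  constructor
  · rintro ⟨h1, h2⟩
    refine ⟨fun hA => ?_, h2⟩
    rw [(hχ x).1 hA] at h1; exact Bool.noConfusion h1
  · rintro ⟨h1, h2⟩
    refine ⟨?_, h2⟩
    cases hc : χ x
    · rfl
    · exact absurd ((hχ x).2 hc) h1

include hχ hugt in
lemma imgSet_not_mem_iff' {t : ℕ} :
    t ∉ imgSet A u ↔ bexb (wq χ u) t t = true := by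
  rw [imgSet_not_mem_iff, bexb_iff]
  constructor
  · rintro ⟨x, hx, hxt⟩
    exact ⟨x, by have := hugt x; omega, (wq_iff hχ).2 ⟨hx, hxt⟩⟩
  · rintro ⟨x, _, hq⟩
    obtain ⟨h1, h2⟩ := (wq_iff hχ).1 hq
    exact ⟨x, h1, h2⟩

include hχ hugt in
lemma imgSet_prset (hχp : Primrec χ) (hup : Primrec u) : PRSet (imgSet A u) := by
  refine ⟨fun t => !(bexb (wq χ u) t t), ?_, ?_⟩
  · apply Primrec.not.comp
    have hq : Primrec₂ (wq χ u) := by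
      unfold wq
      exact Primrec.and.comp₂
        ((Primrec.not.comp (hχp.comp Primrec.snd)).to₂)
        ((Primrec.beq.comp (hup.comp Primrec.snd) Primrec.fst).to₂)
    exact (bexb_primrec hq).comp Primrec.id Primrec.id
  · intro n
    rw [Bool.not_eq_true']
    constructor
    · intro hn
      cases hc : bexb (wq χ u) n n
      · rfl
      · exact absurd ((imgSet_not_mem_iff' hχ hugt).2 hc) (by simpa using hn)
    · intro hb
      by_contra hn
      rw [imgSet_not_mem_iff' hχ hugt, hb] at hn
      exact Bool.noConfusion hn

include hum in
lemma imgSet_zc (t : ℕ) :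
    zc (imgSet A u) t = {x | x ∉ A ∧ u x ≤ t}.ncard := by
  rw [zc]
  have hset : {k | k ≤ t ∧ k ∉ imgSet A u} = u '' {x | x ∉ A ∧ u x ≤ t} := by
    ext k
    simp only [Set.mem_setOf_eq, Set.mem_image, imgSet_not_mem_iff]
    constructor
    · rintro ⟨hk, x, hx, hxk⟩
      exact ⟨x, ⟨hx, by omega⟩, hxk⟩
    · rintro ⟨x, ⟨hx, hxt⟩, hxk⟩
      exact ⟨by omega, x, hx, hxk⟩
  rw [hset, Set.ncard_image_of_injOn (hum.injective.injOn)]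

/-- Bounded inverse of `u`. -/
def uinv (χ : ℕ → Bool) (u : ℕ → ℕ) (t : ℕ) : ℕ := fgr (wq χ u) t t

include hχ hugt in
lemma uinv_spec {t : ℕ} (ht : t ∉ imgSet A u) :
    uinv χ u t ∉ A ∧ u (uinv χ u t) = t := by
  obtain ⟨x, hx, hxt⟩ := imgSet_not_mem_iff.1 ht
  have hxle : x ≤ t := by have := hugt x; omega
  have hxq : wq χ u t x = true := (wq_iff hχ).2 ⟨hx, hxt⟩
  have hle : x ≤ fgr (wq χ u) t t := le_fgr hxle hxq
  rcases fgr_zero_or (q := wq χ u) (a := t) t with h0 | hq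
  · have : x = 0 := by omega
    rw [uinv, h0, ← this]
    exact ⟨hx, hxt⟩
  · exact (wq_iff hχ).1 hq

include hχ hum hugt in
lemma imgSet_equiv (hχp : Primrec χ) (hup : Primrec u) :
    PrEquiv (REq (imgSet A u)) (REq A) := by
  have hq : Primrec₂ (wq χ u) := by
    unfold wq
    exact Primrec.and.comp₂
      ((Primrec.not.comp (hχp.comp Primrec.snd)).to₂)
      ((Primrec.beq.comp (hup.comp Primrec.snd) Primrec.fst).to₂)
  have hbex : Primrec fun t => bexb (wq χ u) t t :=
    (bexb_primrec hq).comp Primrec.id Primrec.id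
  have huinv : Primrec (uinv χ u) := (fgr_primrec hq).comp Primrec.id Primrec.id
  have hmem : ∀ t, t ∉ imgSet A u ↔ bexb (wq χ u) t t = true := fun t =>
    imgSet_not_mem_iff' hχ hugt
  constructor
  · -- REq (imgSet A u) ≤ REq A
    by_cases hA : A.Nonempty
    · obtain ⟨w, hw⟩ := hA
      refine ⟨fun t => bif bexb (wq χ u) t t then uinv χ u t else w, ?_, ?_⟩
      · exact Primrec.cond hbex huinv (Primrec.const w)
      · intro t t'
        by_cases h1 : t ∈ imgSet A u <;> by_cases h2 : t' ∈ imgSet A u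
        · have hb1 : bexb (wq χ u) t t = false := by
            cases hc : bexb (wq χ u) t t
            · rfl
            · exact absurd ((hmem t).2 hc) (by simpa using h1)
          have hb2 : bexb (wq χ u) t' t' = false := by
            cases hc : bexb (wq χ u) t' t'
            · rfl
            · exact absurd ((hmem t').2 hc) (by simpa using h2)
          simp only [hb1, hb2, cond_false]
          constructor
          · intro _; exact Or.inl ⟨hw, hw⟩
          · intro _; exact Or.inl ⟨h1, h2⟩
        · have hb1 : bexb (wq χ u) t t = false := by
            cases hc : bexb (wq χ u) t t
            · rfl
            · exact absurd ((hmem t).2 hc) (by simpa using h1)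
          have hb2 : bexb (wq χ u) t' t' = true := (hmem t').1 h2
          obtain ⟨hni, hui⟩ := uinv_spec hχ hugt h2
          simp only [hb1, hb2, cond_false, cond_true]
          constructor
          · rintro (⟨c1, c2⟩ | rfl)
            · exact absurd c2 h2
            · exact absurd h1 h2
          · rintro (⟨c1, c2⟩ | hc)
            · exact absurd c2 hni
            · exact absurd (hc ▸ hw) hni
        · have hb1 : bexb (wq χ u) t t = true := (hmem t).1 h1
          have hb2 : bexb (wq χ u) t' t' = false := by
            cases hc : bexb (wq χ u) t' t'
            · rfl
            · exact absurd ((hmem t').2 hc) (by simpa using h2)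
          obtain ⟨hni, hui⟩ := uinv_spec hχ hugt h1
          simp only [hb1, hb2, cond_false, cond_true]
          constructor
          · rintro (⟨c1, c2⟩ | rfl)
            · exact absurd c1 h1
            · exact absurd h2 h1
          · rintro (⟨c1, c2⟩ | hc)
            · exact absurd c1 hni
            · exact absurd (hc ▸ hw) (hc ▸ hni)
        · have hb1 : bexb (wq χ u) t t = true := (hmem t).1 h1
          have hb2 : bexb (wq χ u) t' t' = true := (hmem t').1 h2
          obtain ⟨hni, hui⟩ := uinv_spec hχ hugt h1
          obtain ⟨hni', hui'⟩ := uinv_spec hχ hugt h2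
          simp only [hb1, hb2, cond_true]
          constructor
          · rintro (⟨c1, c2⟩ | rfl)
            · exact absurd c1 h1
            · exact Or.inr rfl
          · rintro (⟨c1, c2⟩ | hc)
            · exact absurd c1 hni
            · have : u (uinv χ u t) = u (uinv χ u t') := by rw [hc]
              rw [hui, hui'] at this
              exact Or.inr this
    · -- A is empty
      rw [Set.not_nonempty_iff_eq_empty] at hA
      subst hA
      refine ⟨fun t => bif bexb (wq χ u) t t then uinv χ u t + 1 else 0, ?_, ?_⟩
      · exact Primrec.cond hbex (Primrec.succ.comp huinv) (Primrec.const 0)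
      · intro t t'
        by_cases h1 : t ∈ imgSet ∅ u <;> by_cases h2 : t' ∈ imgSet ∅ u
        · have hb1 : bexb (wq χ u) t t = false := by
            cases hc : bexb (wq χ u) t t
            · rfl
            · exact absurd ((hmem t).2 hc) (by simpa using h1)
          have hb2 : bexb (wq χ u) t' t' = false := by
            cases hc : bexb (wq χ u) t' t'
            · rfl
            · exact absurd ((hmem t').2 hc) (by simpa using h2)
          simp only [hb1, hb2, cond_false]
          constructor
          · intro _; exact Or.inr rfl
          · intro _; exact Or.inl ⟨h1, h2⟩
        · have hb1 : bexb (wq χ u) t t = false := by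
            cases hc : bexb (wq χ u) t t
            · rfl
            · exact absurd ((hmem t).2 hc) (by simpa using h1)
          have hb2 : bexb (wq χ u) t' t' = true := (hmem t').1 h2
          simp only [hb1, hb2, cond_false, cond_true]
          constructor
          · rintro (⟨c1, c2⟩ | rfl)
            · exact absurd c2 h2
            · exact absurd h1 h2
          · rintro (⟨c1, c2⟩ | hc)
            · exact absurd c1 (Set.notMem_empty 0)
            · exact absurd hc (by omega)
        · have hb1 : bexb (wq χ u) t t = true := (hmem t).1 h1
          have hb2 : bexb (wq χ u) t' t' = false := by
            cases hc : bexb (wq χ u) t' t'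
            · rfl
            · exact absurd ((hmem t').2 hc) (by simpa using h2)
          simp only [hb1, hb2, cond_false, cond_true]
          constructor
          · rintro (⟨c1, c2⟩ | rfl)
            · exact absurd c1 h1
            · exact absurd h2 h1
          · rintro (⟨c1, c2⟩ | hc)
            · exact absurd c2 (Set.notMem_empty 0)
            · exact absurd hc (by omega)
        · have hb1 : bexb (wq χ u) t t = true := (hmem t).1 h1
          have hb2 : bexb (wq χ u) t' t' = true := (hmem t').1 h2
          obtain ⟨hni, hui⟩ := uinv_spec hχ hugt h1
          obtain ⟨hni', hui'⟩ := uinv_spec hχ hugt h2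
          simp only [hb1, hb2, cond_true]
          constructor
          · rintro (⟨c1, c2⟩ | rfl)
            · exact absurd c1 h1
            · exact Or.inr rfl
          · rintro (⟨c1, c2⟩ | hc)
            · exact absurd c1 (Set.notMem_empty _)
            · have : u (uinv χ u t) = u (uinv χ u t') := by
                have h' : uinv χ u t = uinv χ u t' := by omega
                rw [h']
              rw [hui, hui'] at this
              exact Or.inr this
  · -- REq A ≤ REq (imgSet A u)
    refine ⟨fun x => bif χ x then 0 else u x, ?_, ?_⟩
    · exact Primrec.cond hχp (Primrec.const 0) hup
    · intro x y
      by_cases hx : x ∈ A <;> by_cases hy : y ∈ A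
      · have hbx : χ x = true := (hχ x).1 hx
        have hby : χ y = true := (hχ y).1 hy
        simp only [hbx, hby, cond_true]
        constructor
        · intro _; exact Or.inr rfl
        · intro _; exact Or.inl ⟨hx, hy⟩
      · have hbx : χ x = true := (hχ x).1 hx
        have hby : χ y = false := by
          cases hc : χ y
          · rfl
          · exact absurd ((hχ y).2 hc) hy
        have huy : u y ∉ imgSet A u := imgSet_not_mem_iff.2 ⟨y, hy, rfl⟩
        simp only [hbx, hby, cond_true, cond_false]
        constructor
        · rintro (⟨c1, c2⟩ | rfl)
          · exact absurd c2 hy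
          · exact absurd hx hy
        · rintro (⟨c1, c2⟩ | hc)
          · exact absurd c2 huy
          · have := hugt y; omega
      · have hbx : χ x = false := by
          cases hc : χ x
          · rfl
          · exact absurd ((hχ x).2 hc) hx
        have hby : χ y = true := (hχ y).1 hy
        have hux : u x ∉ imgSet A u := imgSet_not_mem_iff.2 ⟨x, hx, rfl⟩
        simp only [hbx, hby, cond_true, cond_false]
        constructor
        · rintro (⟨c1, c2⟩ | rfl)
          · exact absurd c1 hx
          · exact absurd hy hx
        · rintro (⟨c1, c2⟩ | hc)
          · exact absurd c1 hux
          · have := hugt x; omega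
      · have hbx : χ x = false := by
          cases hc : χ x
          · rfl
          · exact absurd ((hχ x).2 hc) hx
        have hby : χ y = false := by
          cases hc : χ y
          · rfl
          · exact absurd ((hχ y).2 hc) hy
        have hux : u x ∉ imgSet A u := imgSet_not_mem_iff.2 ⟨x, hx, rfl⟩
        simp only [hbx, hby, cond_false]
        constructor
        · rintro (⟨c1, c2⟩ | rfl)
          · exact absurd c1 hx
          · exact Or.inr rfl
        · rintro (⟨c1, c2⟩ | hc)
          · exact absurd c1 hux
          · exact Or.inr (hum.injective hc)

end ImgSet

/-! ### More `penum` helpers -/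

open Classical in
lemma eq_penum_of_zc {U : Set ℕ} (hUc : Uᶜ.Infinite) {y k : ℕ}
    (hy : y ∉ U) (hz : zc U y = k + 1) : y = penum U k := by
  have h : (setOf fun k => k ∉ U).Infinite := by exact hUc
  rw [zc_eq_count, Nat.count_succ] at hz
  rw [if_pos hy] at hz
  have hcy : Nat.count (fun k => k ∉ U) y = k := by omega
  have := Nat.nth_count (p := fun k => k ∉ U) hy
  rw [hcy] at this
  exact this.symm

open Classical in
lemma le_penum_of_zc_le {U : Set ℕ} (hUc : Uᶜ.Infinite) {y n : ℕ}
    (hy : y ∉ U) (hz : zc U y ≤ n + 1) : y ≤ penum U n := by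
  have h : (setOf fun k => k ∉ U).Infinite := by exact hUc
  rw [zc_eq_count, Nat.count_succ] at hz
  rw [if_pos hy] at hz
  have hcy : Nat.count (fun k => k ∉ U) y ≤ n := by omega
  have h1 := Nat.nth_count (p := fun k => k ∉ U) hy
  calc y = Nat.nth (fun k => k ∉ U) (Nat.count (fun k => k ∉ U) y) := h1.symm
    _ ≤ Nat.nth (fun k => k ∉ U) n := (Nat.nth_le_nth h).2 hcy

open Classical in
lemma ncard_setOf_lt_penum {U : Set ℕ} (hUc : Uᶜ.Infinite) (m : ℕ) :
    {y | y ∉ U ∧ y < penum U m}.ncard = m := by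
  have h : (setOf fun k => k ∉ U).Infinite := by exact hUc
  have hs : {y | y ∉ U ∧ y < penum U m} =
      ↑((Finset.range (penum U m)).filter (fun k => k ∉ U)) := by
    ext k; simp [and_comm]
  rw [hs, Set.ncard_coe_finset, ← Nat.count_eq_card_filter_range]
  exact Nat.count_nth_of_infinite h m

lemma le_penum_self {U : Set ℕ} (hUc : Uᶜ.Infinite) (n : ℕ) : n ≤ penum U n :=
  (penum_strictMono hUc).le_apply

/-! ### The stretching functions for the backward direction -/

section Back

variable (χX χY : ℕ → Bool) (f r : ℕ → ℕ)

/-- Bounded computation of the `zc X x - 1`-th element of the complement of `Y`. -/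
def ynthF : ℕ → ℕ := fun x =>
  fgr (fun x' y => !χY y && (cnt χY (y + 1) == cnt χX (x' + 1))) x (gm f x)

/-- The stretching function for `X`. -/
def sF : ℕ → ℕ := fun x =>
  Nat.rec (max (rhat r (ynthF χX χY f 0) + 1) 2)
    (fun m ih => max (rhat r (ynthF χX χY f (m + 1)) + 1) (max (ih + 2) (2 * (m + 1) + 2))) x

lemma sF_succ (m : ℕ) : sF χX χY f r (m + 1) =
    max (rhat r (ynthF χX χY f (m + 1)) + 1) (max (sF χX χY f r m + 2) (2 * (m + 1) + 2)) := rfl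

lemma sF_gt_rhat (x : ℕ) : rhat r (ynthF χX χY f x) < sF χX χY f r x := by
  cases x with
  | zero => show _ < max _ 2; omega
  | succ m => rw [sF_succ]; omega

lemma sF_ge (x : ℕ) : 2 * x + 2 ≤ sF χX χY f r x := by
  cases x with
  | zero => show _ ≤ max _ 2; omega
  | succ m => rw [sF_succ]; omega

lemma sF_strictMono : StrictMono (sF χX χY f r) := by
  apply strictMono_nat_of_lt_succ
  intro m
  rw [sF_succ]; omega

lemma sF_gt_id (x : ℕ) : x < sF χX χY f r x := by have := sF_ge χX χY f r x; omega

lemma sF_bound (M : ℕ) : ∀ x, (∀ x', x' ≤ x → ynthF χX χY f x' ≤ M) →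
    sF χX χY f r x ≤ max (rhat r M + 1) (2 * x + 2) + 2 * x := by
  intro x
  induction x with
  | zero =>
    intro hM
    have h1 : rhat r (ynthF χX χY f 0) ≤ rhat r M :=
      (rhat_strictMono r).monotone (hM 0 le_rfl)
    show max _ 2 ≤ _
    omega
  | succ m ih =>
    intro hM
    have h1 : rhat r (ynthF χX χY f (m + 1)) ≤ rhat r M :=
      (rhat_strictMono r).monotone (hM (m + 1) le_rfl)
    have h2 := ih (fun x' hx' => hM x' (by omega))
    rw [sF_succ]
    omega

lemma ynthF_primrec (hχX : Primrec χX) (hχY : Primrec χY) (hf : Primrec f) :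
    Primrec (ynthF χX χY f) := by
  have hq : Primrec₂ (fun x' y => !χY y && (cnt χY (y + 1) == cnt χX (x' + 1))) := by
    apply Primrec.and.comp₂
    · exact (Primrec.not.comp (hχY.comp Primrec.snd)).to₂
    · exact (Primrec.beq.comp ((cnt_primrec hχY).comp (Primrec.succ.comp Primrec.snd))
        ((cnt_primrec hχX).comp (Primrec.succ.comp Primrec.fst))).to₂
  exact (fgr_primrec hq).comp Primrec.id (gm_primrec hf)

lemma sF_primrec (hχX : Primrec χX) (hχY : Primrec χY) (hf : Primrec f) (hr : Primrec r) :
    Primrec (sF χX χY f r) := by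
  have hy := ynthF_primrec χX χY f hχX hχY hf
  have hstep : Primrec fun p : ℕ × ℕ =>
      max (rhat r (ynthF χX χY f (p.1 + 1)) + 1) (max (p.2 + 2) (2 * (p.1 + 1) + 2)) := by
    apply Primrec.nat_max.comp
    · exact Primrec.succ.comp ((rhat_primrec hr).comp (hy.comp (Primrec.succ.comp Primrec.fst)))
    · apply Primrec.nat_max.comp
      · exact Primrec.nat_add.comp Primrec.snd (Primrec.const 2)
      · exact Primrec.nat_add.comp
          (Primrec.nat_mul.comp (Primrec.const 2) (Primrec.succ.comp Primrec.fst))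
          (Primrec.const 2)
  exact Primrec.nat_rec₁ _ hstep.to₂

end Back

lemma backward_dir {X Y : Set ℕ} (hX : PRSet X) (hY : PRSet Y)
    (hXc : Xᶜ.Infinite) (hYc : Yᶜ.Infinite) (hred : PrRed (REq X) (REq Y))
    {r : ℕ → ℕ} (hr : Primrec r)
    (hio : {n | penum X n ≤ r (penum Y (n + 1))}.Infinite) : DiamondProp X Y := by
  obtain ⟨χX, hχXp, hχX⟩ := hX
  obtain ⟨χY, hχYp, hχY⟩ := hY
  obtain ⟨f, hfp, hf⟩ := hred
  have hc : ∀ k, penum Y k ≤ gm f (penum X k) := red_penum_le hXc hYc hf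
  have hyd : ∀ x, ynthF χX χY f x =
      fgr (fun x' y => !χY y && (cnt χY (y + 1) == cnt χX (x' + 1))) x (gm f x) :=
    fun _ => rfl
  -- characterization of the witness predicate
  have hyq : ∀ x y, (!χY y && (cnt χY (y + 1) == cnt χX (x + 1))) = true ↔
      (y ∉ Y ∧ zc Y y = zc X x) := by
    intro x y
    rw [Bool.and_eq_true, Bool.not_eq_true', beq_iff_eq, cnt_eq_zc hχY, cnt_eq_zc hχX]
    constructor
    · rintro ⟨h1, h2⟩
      refine ⟨fun hA => ?_, h2⟩
      rw [(hχY y).1 hA] at h1; exact Bool.noConfusion h1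
    · rintro ⟨h1, h2⟩
      refine ⟨?_, h2⟩
      cases hcc : χY y
      · rfl
      · exact absurd ((hχY y).2 hcc) h1
  -- (P1) : ynthF at penum X k equals penum Y k
  have P1 : ∀ k, ynthF χX χY f (penum X k) = penum Y k := by
    intro k
    have hw : (!χY (penum Y k) &&
        (cnt χY (penum Y k + 1) == cnt χX (penum X k + 1))) = true := by
      rw [hyq]
      exact ⟨penum_mem hYc k, by rw [zc_penum hYc, zc_penum hXc]⟩
    have hle : penum Y k ≤ ynthF χX χY f (penum X k) := le_fgr (hc k) hw
    rcases fgr_zero_or (q := fun x' y => !χY y && (cnt χY (y + 1) == cnt χX (x' + 1)))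
        (a := penum X k) (gm f (penum X k)) with h0 | hq
    · rw [hyd] at hle ⊢
      rw [h0] at hle ⊢
      omega
    · rw [hyq] at hq
      obtain ⟨h1, h2⟩ := hq
      rw [zc_penum hXc] at h2
      rw [hyd]
      exact eq_penum_of_zc hYc h1 h2
  -- (P2) : ynthF is bounded by penum Y n below penum X n
  have P2 : ∀ n x, x ≤ penum X n → ynthF χX χY f x ≤ penum Y n := by
    intro n x hx
    rcases fgr_zero_or (q := fun x' y => !χY y && (cnt χY (y + 1) == cnt χX (x' + 1)))
        (a := x) (gm f x) with h0 | hq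
    · rw [hyd, h0]; omega
    · rw [hyq] at hq
      obtain ⟨h1, h2⟩ := hq
      have h3 : zc X x ≤ n + 1 := by
        have := zc_mono X hx
        rw [zc_penum hXc] at this
        omega
      rw [hyd]
      exact le_penum_of_zc_le hYc h1 (by omega)
  have hsmono : StrictMono (sF χX χY f r) := sF_strictMono χX χY f r
  have hsgt : ∀ x, x < sF χX χY f r x := sF_gt_id χX χY f r
  have humono : StrictMono (rhat r) := rhat_strictMono r
  have hugt : ∀ y, y < rhat r y := rhat_gt r
  refine ⟨imgSet X (sF χX χY f r), imgSet Y (rhat r),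
    imgSet_prset hχX hsgt hχXp (sF_primrec χX χY f r hχXp hχYp hfp hr),
    imgSet_prset hχY hugt hχYp (rhat_primrec hr),
    imgSet_equiv hχX hsmono hsgt hχXp (sF_primrec χX χY f r hχXp hχYp hfp hr),
    imgSet_equiv hχY humono hugt hχYp (rhat_primrec hr), ?_⟩
  intro S
  obtain ⟨n, hn_mem, hnS⟩ := hio.exists_gt S
  simp only [Set.mem_setOf_eq] at hn_mem
  set T := rhat r (penum Y (n + 1)) with hT
  have hTy : penum Y (n + 1) < T := hugt _
  have hyn1 : n + 1 ≤ penum Y (n + 1) := le_penum_self hYc (n + 1)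
  refine ⟨T - 1, by omega, ?_⟩
  -- key inequality at the good point n
  have good : sF χX χY f r (penum X n) < T := by
    have hb := sF_bound χX χY f r (penum Y n) (penum X n)
      (fun x' hx' => P2 n x' hx')
    have hyy : penum Y n < penum Y (n + 1) := penum_strictMono hYc (by omega)
    have hxr : penum X n ≤ RM r (penum Y (n + 1)) := le_trans hn_mem (le_RM r le_rfl)
    have hgap := rhat_gap r hyy hxr
    omega
  have hS6 : T < sF χX χY f r (penum X (n + 1)) := by
    have h := sF_gt_rhat χX χY f r (penum X (n + 1))
    rw [P1 (n + 1)] at h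
    exact h
  -- compute the two counting functions at T - 1
  have hzcY : zc (imgSet Y (rhat r)) (T - 1) = n + 1 := by
    rw [imgSet_zc humono]
    have hset : {y | y ∉ Y ∧ rhat r y ≤ T - 1} = {y | y ∉ Y ∧ y < penum Y (n + 1)} := by
      ext y
      simp only [Set.mem_setOf_eq]
      constructor
      · rintro ⟨h1, h2⟩
        refine ⟨h1, ?_⟩
        have hlt : rhat r y < T := by omega
        rw [hT] at hlt
        exact humono.lt_iff_lt.1 hlt
      · rintro ⟨h1, h2⟩
        have hlt : rhat r y < T := humono h2
        exact ⟨h1, by omega⟩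
    rw [hset, ncard_setOf_lt_penum hYc]
  have hzcX : zc (imgSet X (sF χX χY f r)) (T - 1) = n + 1 := by
    rw [imgSet_zc hsmono]
    have hset : {x | x ∉ X ∧ sF χX χY f r x ≤ T - 1} =
        {x | x ∉ X ∧ x < penum X (n + 1)} := by
      ext x
      simp only [Set.mem_setOf_eq]
      constructor
      · rintro ⟨h1, h2⟩
        refine ⟨h1, ?_⟩
        by_contra hcon
        push_neg at hcon
        have := hsmono.monotone hcon
        omega
      · rintro ⟨h1, h2⟩
        have hxn : x ≤ penum X n := le_penum_of_lt_succ h1 h2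
        have := hsmono.monotone hxn
        exact ⟨h1, by omega⟩
    rw [hset, ncard_setOf_lt_penum hXc]
  rw [hzcX, hzcY]

theorem stmt_16 (X Y : Set ℕ) (hX : PRSet X) (hY : PRSet Y)
    (hXc : Xᶜ.Infinite) (hYc : Yᶜ.Infinite)
    (hred : PrRed (REq X) (REq Y)) :
    DiamondProp X Y ↔
      ∃ r : ℕ → ℕ, Primrec r ∧ {n | penum X n ≤ r (penum Y (n + 1))}.Infinite := by
  constructor
  · exact forward_dir hXc hYc
  · rintro ⟨r, hr, hio⟩
    exact backward_dir hX hY hXc hYc hred hr hio
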